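/- Let e, d be coprime positive integers, n = e+d, p = p_e ⊂ sl_n(ℂ) the e-th parabolic subalgebra, n ⊂ p the abelian ideal of block matrices [[0,B],[0,0]], and J = J_{(e,d)} the canonical 0-1 matrix. Then for every G ∈ sl_n(ℂ) there exist unique P ∈ p and N ∈ n such that G = [Jᵗ, P] + N. -/

import Mathlib

open Matrix

/-- The entries of the canonical 0-1 matrix `J_{(e,d)}` defined by the recursion
`J_{(1,1)} = [[0,1],[0,0]]` together with the block extension rules. -/
noncomputable def Jfun : ℕ → ℕ → ℕ → ℕ → ℂ
  | e, d, i, j =>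
    if e = 1 ∧ d = 1 then (if i = 0 ∧ j = 1 then 1 else 0)
    else if h1 : 0 < e ∧ e < d then
      (if i < e then (if j = i + e then 1 else 0)
       else if e ≤ j then Jfun e (d - e) (i - e) (j - e) else 0)
    else if h2 : 0 < d ∧ d < e then
      (if i < e ∧ j < e then Jfun (e - d) d i j
       else if e - d ≤ i ∧ i < e ∧ j = i + d then 1 else 0)
    else 0
  termination_by e d _ _ => e + d
  decreasing_by all_goals omega

lemma range_split (a b : ℕ) (f : ℕ → ℂ) :
    ∑ k ∈ Finset.range (a + b), f k
      = ∑ k ∈ Finset.range a, f k + ∑ k ∈ Finset.range b, f (a + k) := by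
  induction b with
  | zero => simp
  | succ b ih =>
      rw [Nat.add_succ, Finset.sum_range_succ, Finset.sum_range_succ, ih, add_assoc]

lemma sum_delta1 (m s t : ℕ) (g : ℕ → ℂ) :
    ∑ k ∈ Finset.range m, (if t = k + s then 1 else 0) * g k
      = if s ≤ t ∧ t < s + m then g (t - s) else 0 := by
  induction m with
  | zero => simp only [Finset.range_zero, Finset.sum_empty]
            rw [if_neg (by omega)]
  | succ m ih =>
      rw [Finset.sum_range_succ, ih]
      by_cases h : t = m + s
      · rw [if_neg (by omega), if_pos h, if_pos (by omega), zero_add, one_mul]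
        congr 1; omega
      · rw [if_neg h, zero_mul, add_zero]
        exact if_congr (by omega) rfl rfl

lemma sum_delta2 (m t : ℕ) (g : ℕ → ℂ) (c : ℂ) :
    ∑ k ∈ Finset.range m, g k * (if k = t then c else 0)
      = if t < m then g t * c else 0 := by
  simp only [mul_ite, mul_zero]
  rw [Finset.sum_ite_eq' (Finset.range m) t (fun k => g k * c)]
  simp [Finset.mem_range]

lemma sum_delta3 (m t : ℕ) (g : ℕ → ℂ) (c : ℂ) :
    ∑ k ∈ Finset.range m, (if t = k then c else 0) * g k
      = if t < m then c * g t else 0 := by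
  simp only [ite_mul, zero_mul]
  rw [Finset.sum_ite_eq (Finset.range m) t (fun k => c * g k)]
  simp [Finset.mem_range]

lemma Jlt {e d : ℕ} (he : 0 < e) (hlt : e < d) (i j : ℕ) :
    Jfun e d i j = if i < e then (if j = i + e then 1 else 0)
       else if e ≤ j then Jfun e (d - e) (i - e) (j - e) else 0 := by
  rw [Jfun]; rw [if_neg (by omega), dif_pos ⟨he, hlt⟩]

lemma Jgt {e d : ℕ} (hd : 0 < d) (hgt : d < e) (i j : ℕ) :
    Jfun e d i j = if i < e ∧ j < e then Jfun (e - d) d i j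
       else if e - d ≤ i ∧ i < e ∧ j = i + d then 1 else 0 := by
  rw [Jfun]; rw [if_neg (by omega), dif_neg (by omega), dif_pos ⟨hd, hgt⟩]

lemma J11 (i j : ℕ) : Jfun 1 1 i j = if i = 0 ∧ j = 1 then 1 else 0 := by
  rw [Jfun]; simp

lemma key : ∀ n : ℕ, ∀ e d : ℕ, n = e + d → 0 < e → 0 < d → Nat.Coprime e d →
    ∀ P : ℕ → ℕ → ℂ,
    (∀ i j, i < n → j < n → e ≤ i → j < e → P i j = 0) →
    (∀ i j, i < n → j < n → ¬(i < e ∧ e ≤ j) →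
      ∑ k ∈ Finset.range n, Jfun e d k i * P k j
        = ∑ k ∈ Finset.range n, P i k * Jfun e d j k) →
    ∀ i j, i < n → j < n → P i j = if i = j then P 0 0 else 0 := by
  intro n
  induction n using Nat.strong_induction_on with
  | _ n IH =>
  intro e d hn he hd hcop P hb hc
  rcases lt_trichotomy e d with hlt | heq | hgt
  · -- case e < d
    subst hn
    have hJ1 : ∀ k i : ℕ, k < e → Jfun e d k i = if i = k + e then 1 else 0 := by
      intro k i hk; rw [Jlt he hlt, if_pos hk]
    have hJ2 : ∀ k i : ℕ, Jfun e d (e + k) i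
        = if e ≤ i then Jfun e (d - e) k (i - e) else 0 := by
      intro k i; rw [Jlt he hlt, if_neg (by omega), Nat.add_sub_cancel_left]
    have hS1 : ∀ i j, ∑ k ∈ Finset.range (e + d), Jfun e d k i * P k j
          = (if e ≤ i ∧ i < e + e then P (i - e) j else 0)
            + (if e ≤ i then ∑ k ∈ Finset.range d,
                Jfun e (d - e) k (i - e) * P (e + k) j else 0) := by
      intro i j
      rw [range_split]
      congr 1
      · rw [Finset.sum_congr rfl (fun k hk => by
          rw [hJ1 k i (Finset.mem_range.mp hk)]), sum_delta1]
      · rw [Finset.sum_congr rfl (fun k _ => by rw [hJ2 k i])]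
        by_cases hei : e ≤ i
        · simp only [if_pos hei]
        · simp only [if_neg hei, zero_mul, Finset.sum_const_zero]
    have hS2a : ∀ i j, j < e →
        ∑ k ∈ Finset.range (e + d), P i k * Jfun e d j k = P i (j + e) := by
      intro i j hj
      rw [Finset.sum_congr rfl (fun k _ => by rw [hJ1 j k hj]), sum_delta2,
        if_pos (by omega), mul_one]
    have hS2b : ∀ i b, ∑ k ∈ Finset.range (e + d), P i k * Jfun e d (e + b) k
          = ∑ k ∈ Finset.range d, P i (e + k) * Jfun e (d - e) b k := by
      intro i b
      rw [range_split]
      have h1 : ∑ k ∈ Finset.range e, P i k * Jfun e d (e + b) k = 0 := by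
        apply Finset.sum_eq_zero; intro k hk
        have hk' := Finset.mem_range.mp hk
        rw [hJ2 b k, if_neg (by omega : ¬ e ≤ k), mul_zero]
      rw [h1, zero_add]
      apply Finset.sum_congr rfl; intro k _
      rw [hJ2 b (e + k), if_pos (by omega), Nat.add_sub_cancel_left]
    -- consequences
    have C1 : ∀ i j, i < e → j < e → P i (j + e) = 0 := by
      intro i j hi hj
      have h := hc i j (by omega) (by omega) (by omega)
      rw [hS1, hS2a i j hj, if_neg (by omega), if_neg (by omega), add_zero] at h
      exact h.symm
    have C2 : ∀ i j, e ≤ i → i < e + d → j < e →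
        P i (j + e) = if e ≤ i ∧ i < e + e then P (i - e) j else 0 := by
      intro i j hi hin hj
      have h := hc i j hin (by omega) (by omega)
      rw [hS1, hS2a i j hj] at h
      have hz : ∑ k ∈ Finset.range d, Jfun e (d - e) k (i - e) * P (e + k) j = 0 := by
        apply Finset.sum_eq_zero; intro k hk
        have hk' := Finset.mem_range.mp hk
        rw [hb (e + k) j (by omega) (by omega) (by omega) hj, mul_zero]
      rw [hz, if_pos hi, add_zero] at h
      exact h.symm
    have C3 : ∀ a b, a < d → b < d →
        (if a < e then P a (e + b) else 0)
          + ∑ k ∈ Finset.range d, Jfun e (d - e) k a * P (e + k) (e + b)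
        = ∑ k ∈ Finset.range d, P (e + a) (e + k) * Jfun e (d - e) b k := by
      intro a b ha hbd
      have h := hc (e + a) (e + b) (by omega) (by omega) (by omega)
      rw [hS1, hS2b, if_pos (by omega : e ≤ e + a), Nat.add_sub_cancel_left] at h
      rw [← h]
      congr 1
      exact if_congr (by omega) rfl rfl
    -- IH application
    have hcop' : Nat.Coprime e (d - e) :=
      (Nat.coprime_sub_self_right (by omega)).mpr hcop
    have IHres0 := IH d (by omega) e (d - e) (by omega) he (by omega) hcop'
      (fun a b => P (e + a) (e + b))
      (by
        intro a b ha hbd hea hbe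
        have h := C2 (e + a) b (by omega) (by omega) hbe
        rw [if_neg (by omega)] at h
        show P (e + a) (e + b) = 0
        rw [show e + b = b + e by omega]
        exact h)
      (by
        intro a b ha hbd hg
        have h := C3 a b ha hbd
        have hz : (if a < e then P a (e + b) else 0) = 0 := by
          by_cases hae : a < e
          · rw [if_pos hae]
            have hbe : b < e := by omega
            rw [show e + b = b + e by omega]
            exact C1 a b hae hbe
          · rw [if_neg hae]
        rw [hz, zero_add] at h
        exact h)
    have IHres : ∀ a b, a < d → b < d →
        P (e + a) (e + b) = if a = b then P (e + 0) (e + 0) else 0 := IHres0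
    have hPee : P e e = P 0 0 := by
      have := C2 e 0 (le_refl e) (by omega) he
      rw [if_pos (by omega), Nat.sub_self, Nat.zero_add] at this
      exact this
    have hc' : P (e + 0) (e + 0) = P 0 0 := by
      rw [Nat.add_zero]; exact hPee
    -- final case analysis
    intro i j hi hj
    by_cases hie : i < e
    · by_cases hje : j < e
      · have h1 := IHres i j (by omega) (by omega)
        have h2 := C2 (e + i) j (by omega) (by omega) hje
        rw [if_pos (by omega), Nat.add_sub_cancel_left] at h2
        rw [show e + j = j + e by omega] at h1
        rw [h2] at h1
        rw [h1, hc']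
      · -- i < e ≤ j : show P i j = 0
        rw [if_neg (by omega)]
        have hbd : j - e < d := by omega
        have h := C3 i (j - e) (by omega) hbd
        have e1 : ∑ k ∈ Finset.range d, Jfun e (d - e) k i * P (e + k) (e + (j - e))
            = Jfun e (d - e) (j - e) i * P 0 0 := by
          rw [Finset.sum_congr rfl (fun k hk => by
            rw [IHres k (j - e) (Finset.mem_range.mp hk) hbd]), sum_delta2, if_pos hbd, hc']
        have e2 : ∑ k ∈ Finset.range d, P (e + i) (e + k) * Jfun e (d - e) (j - e) k
            = P 0 0 * Jfun e (d - e) (j - e) i := by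
          rw [Finset.sum_congr rfl (fun k hk => by
            rw [IHres i k (by omega) (Finset.mem_range.mp hk)]), sum_delta3,
            if_pos (by omega : i < d), hc']
        rw [e1, e2, if_pos hie] at h
        have : P i (e + (j - e)) = 0 := by
          have hcomm : Jfun e (d - e) (j - e) i * P 0 0
              = P 0 0 * Jfun e (d - e) (j - e) i := mul_comm _ _
          rw [hcomm] at h
          exact (right_eq_add.mp h.symm)
        rw [show e + (j - e) = j by omega] at this
        exact this
    · by_cases hje : j < e
      · rw [hb i j hi hj (by omega) hje, if_neg (by omega)]
      · have h := IHres (i - e) (j - e) (by omega) (by omega)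
        rw [show e + (i - e) = i by omega, show e + (j - e) = j by omega] at h
        rw [h, hc']
        exact if_congr (by omega) rfl rfl
  · -- case e = d : then e = d = 1
    have he1 : e = 1 := by
      have := hcop
      rw [Nat.Coprime, heq, Nat.gcd_self] at this
      omega
    subst heq; subst he1; subst hn
    have hb10 := hb 1 0 (by omega) (by omega) (by omega) (by omega)
    have h00 := hc 0 0 (by omega) (by omega) (by omega)
    have h10 := hc 1 0 (by omega) (by omega) (by omega)
    simp only [show (1:ℕ)+1 = 2 from rfl, Finset.sum_range_succ, Finset.sum_range_one,
      J11] at h00 h10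
    norm_num at h00 h10
    clear hc hb IH hcop hd he
    intro i j hi hj
    interval_cases i <;> interval_cases j <;> simp_all
  · -- case d < e
    subst hn
    have hJ3 : ∀ i j : ℕ, i < e → j < e → Jfun e d i j = Jfun (e - d) d i j := by
      intro i j hi hj; rw [Jgt hd hgt, if_pos ⟨hi, hj⟩]
    have hJ4 : ∀ i j : ℕ, ¬(i < e ∧ j < e) →
        Jfun e d i j = if e - d ≤ i ∧ i < e ∧ j = i + d then 1 else 0 := by
      intro i j hij; rw [Jgt hd hgt, if_neg hij]
    have hS1 : ∀ i j, i < e + d →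
        ∑ k ∈ Finset.range (e + d), Jfun e d k i * P k j
          = if i < e then ∑ k ∈ Finset.range e, Jfun (e - d) d k i * P k j
            else P (i - d) j := by
      intro i j hi
      rw [range_split]
      have h2 : ∑ k ∈ Finset.range d, Jfun e d (e + k) i * P (e + k) j = 0 := by
        apply Finset.sum_eq_zero; intro k _
        rw [hJ4 (e + k) i (by omega), if_neg (by omega), zero_mul]
      rw [h2, add_zero]
      by_cases hie : i < e
      · rw [if_pos hie]
        apply Finset.sum_congr rfl; intro k hk
        rw [hJ3 k i (Finset.mem_range.mp hk) hie]
      · rw [if_neg hie]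
        rw [Finset.sum_congr rfl (fun k hk => by
          rw [hJ4 k i (by omega),
            show (if e - d ≤ k ∧ k < e ∧ i = k + d then (1:ℂ) else 0)
              = if i = k + d then 1 else 0 from
            if_congr (by have := Finset.mem_range.mp hk; omega) rfl rfl]), sum_delta1,
          if_pos (by omega)]
    have hS2 : ∀ i j, j < e + d →
        ∑ k ∈ Finset.range (e + d), P i k * Jfun e d j k
          = (if j < e then ∑ k ∈ Finset.range e, P i k * Jfun (e - d) d j k else 0)
            + (if e - d ≤ j ∧ j < e then P i (j + d) else 0) := by
      intro i j hj
      rw [range_split]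
      congr 1
      · by_cases hje : j < e
        · rw [if_pos hje]
          apply Finset.sum_congr rfl; intro k hk
          rw [hJ3 j k hje (Finset.mem_range.mp hk)]
        · rw [if_neg hje]
          apply Finset.sum_eq_zero; intro k hk
          rw [hJ4 j k (by omega), if_neg (by omega), mul_zero]
      · by_cases hj' : e - d ≤ j ∧ j < e
        · rw [if_pos hj']
          rw [Finset.sum_congr rfl (fun k hk => by
            rw [hJ4 j (e + k) (by omega),
              show (if e - d ≤ j ∧ j < e ∧ e + k = j + d then (1:ℂ) else 0)
                = if k = j + d - e then 1 else 0 from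
              if_congr (by omega) rfl rfl]), sum_delta2, if_pos (by omega : j + d - e < d),
            mul_one, show e + (j + d - e) = j + d by omega]
        · rw [if_neg hj']
          apply Finset.sum_eq_zero; intro k _
          rw [hJ4 j (e + k) (by omega), if_neg (by omega), mul_zero]
    -- consequences
    have D1 : ∀ i j, i < e → j < e →
        ∑ k ∈ Finset.range e, Jfun (e - d) d k i * P k j
          = ∑ k ∈ Finset.range e, P i k * Jfun (e - d) d j k
            + (if e - d ≤ j then P i (j + d) else 0) := by
      intro i j hi hj
      have h := hc i j (by omega) (by omega) (by omega)
      rw [hS1 i j (by omega), hS2 i j (by omega), if_pos hi, if_pos hj] at h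
      rw [h]
      congr 1
      exact if_congr (by omega) rfl rfl
    have D2 : ∀ i j, e ≤ i → i < e + d → j < e →
        P (i - d) j = if e - d ≤ j then P i (j + d) else 0 := by
      intro i j hi hin hj
      have h := hc i j hin (by omega) (by omega)
      rw [hS1 i j hin, hS2 i j (by omega), if_neg (by omega), if_pos hj] at h
      have hz : ∑ k ∈ Finset.range e, P i k * Jfun (e - d) d j k = 0 := by
        apply Finset.sum_eq_zero; intro k hk
        have hk' := Finset.mem_range.mp hk
        rw [hb i k hin (by omega) hi hk', zero_mul]
      rw [hz, zero_add] at h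
      rw [h]
      exact if_congr (by omega) rfl rfl
    have D3 : ∀ i j, e ≤ i → i < e + d → e ≤ j → j < e + d → P (i - d) j = 0 := by
      intro i j hi hin hj hjn
      have h := hc i j hin hjn (by omega)
      rw [hS1 i j hin, hS2 i j hjn, if_neg (by omega), if_neg (by omega),
        if_neg (by omega), add_zero] at h
      exact h
    -- IH application
    have hcop' : Nat.Coprime (e - d) d :=
      (Nat.coprime_sub_self_left (by omega)).mpr hcop
    have IHres := IH e (by omega) (e - d) d (by omega) (by omega) hd hcop' P
      (by
        intro i j hi hj hedi hjed
        have := D2 (i + d) j (by omega) (by omega) (by omega)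
        rw [Nat.add_sub_cancel, if_neg (by omega)] at this
        exact this)
      (by
        intro i j hi hj hg
        have h := D1 i j hi hj
        have hz : (if e - d ≤ j then P i (j + d) else 0) = 0 := by
          by_cases hj' : e - d ≤ j
          · rw [if_pos hj']
            have := D3 (i + d) (j + d) (by omega) (by omega) (by omega) (by omega)
            rw [Nat.add_sub_cancel] at this
            exact this
          · rw [if_neg hj']
        rw [hz, add_zero] at h
        exact h)
    -- final case analysis
    intro i j hi hj
    by_cases hie : i < e
    · by_cases hje : j < e
      · exact IHres i j hie hje
      · rw [if_neg (by omega)]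
        by_cases hied : e - d ≤ i
        · have := D3 (i + d) j (by omega) (by omega) (by omega) hj
          rw [Nat.add_sub_cancel] at this
          exact this
        · set j' := j - d with hj'def
          have hj'1 : e - d ≤ j' := by omega
          have hj'2 : j' < e := by omega
          have h := D1 i j' hie hj'2
          have e1 : ∑ k ∈ Finset.range e, Jfun (e - d) d k i * P k j'
              = Jfun (e - d) d j' i * P 0 0 := by
            rw [Finset.sum_congr rfl (fun k hk => by
              rw [IHres k j' (Finset.mem_range.mp hk) hj'2]), sum_delta2, if_pos hj'2]
          have e2 : ∑ k ∈ Finset.range e, P i k * Jfun (e - d) d j' k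
              = P 0 0 * Jfun (e - d) d j' i := by
            rw [Finset.sum_congr rfl (fun k hk => by
              rw [IHres i k hie (Finset.mem_range.mp hk)]), sum_delta3, if_pos hie]
          rw [e1, e2, if_pos hj'1, mul_comm] at h
          have hz : P i (j' + d) = 0 := (left_eq_add.mp h)
          rw [show j' + d = j by omega] at hz
          exact hz
    · by_cases hje : j < e
      · rw [hb i j hi hj (by omega) hje, if_neg (by omega)]
      · have hd2 := D2 i (j - d) (by omega) hi (by omega)
        rw [if_pos (by omega), show j - d + d = j by omega] at hd2
        have := IHres (i - d) (j - d) (by omega) (by omega)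
        rw [this] at hd2
        rw [← hd2]
        exact (if_congr (by omega) rfl rfl).symm

lemma keyM (e d : ℕ) (he : 0 < e) (hd : 0 < d) (hcop : Nat.Coprime e d)
    (P : Matrix (Fin (e + d)) (Fin (e + d)) ℂ)
    (hb : ∀ i j : Fin (e + d), e ≤ (i : ℕ) → (j : ℕ) < e → P i j = 0)
    (hcm : ∀ i j : Fin (e + d), ¬((i : ℕ) < e ∧ e ≤ (j : ℕ)) →
      ((Matrix.of fun i j : Fin (e + d) => Jfun e d (i : ℕ) (j : ℕ))ᵀ * P
        - P * (Matrix.of fun i j : Fin (e + d) => Jfun e d (i : ℕ) (j : ℕ))ᵀ) i j = 0) :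
    ∃ c : ℂ, P = c • 1 := by
  have hn : 0 < e + d := by omega
  let n := e + d
  let Pn : ℕ → ℕ → ℂ :=
    fun i j => if h : i < e + d ∧ j < e + d then P ⟨i, h.1⟩ ⟨j, h.2⟩ else 0
  have hPn : ∀ (i j : Fin (e + d)), Pn (i : ℕ) (j : ℕ) = P i j := by
    intro i j
    show dite _ _ _ = _
    rw [dif_pos ⟨i.isLt, j.isLt⟩]
  have hres := key (e + d) e d rfl he hd hcop Pn
    (by
      intro i j hi hj hei hje
      have h := hb ⟨i, hi⟩ ⟨j, hj⟩ hei hje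
      rw [← hPn ⟨i, hi⟩ ⟨j, hj⟩] at h
      exact h)
    (by
      intro i j hi hj hg
      have h := hcm ⟨i, hi⟩ ⟨j, hj⟩ hg
      rw [Matrix.sub_apply, sub_eq_zero, Matrix.mul_apply, Matrix.mul_apply] at h
      have e1 : ∑ k : Fin (e + d),
            (Matrix.of fun a b : Fin (e + d) => Jfun e d (a : ℕ) (b : ℕ))ᵀ ⟨i, hi⟩ k * P k ⟨j, hj⟩
          = ∑ k ∈ Finset.range (e + d), Jfun e d k i * Pn k j := by
        rw [← Fin.sum_univ_eq_sum_range (fun k => Jfun e d k i * Pn k j) (e + d)]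
        apply Finset.sum_congr rfl; intro k _
        rw [Matrix.transpose_apply, Matrix.of_apply, hPn k ⟨j, hj⟩]
      have e2 : ∑ k : Fin (e + d),
            P ⟨i, hi⟩ k * (Matrix.of fun a b : Fin (e + d) => Jfun e d (a : ℕ) (b : ℕ))ᵀ k ⟨j, hj⟩
          = ∑ k ∈ Finset.range (e + d), Pn i k * Jfun e d j k := by
        rw [← Fin.sum_univ_eq_sum_range (fun k => Pn i k * Jfun e d j k) (e + d)]
        apply Finset.sum_congr rfl; intro k _
        rw [Matrix.transpose_apply, Matrix.of_apply, hPn ⟨i, hi⟩ k]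
      rw [e1, e2] at h
      exact h)
  refine ⟨Pn 0 0, ?_⟩
  ext i j
  have h := hres (i : ℕ) (j : ℕ) i.isLt j.isLt
  rw [hPn i j] at h
  rw [h, Matrix.smul_apply, Matrix.one_apply, smul_eq_mul]
  by_cases hij : i = j
  · rw [if_pos hij, if_pos (by rw [hij]), mul_one]
  · rw [if_neg (fun hh => hij (Fin.ext hh)), if_neg hij, mul_zero]

theorem stmt_12 (e d : ℕ) (he : 0 < e) (hd : 0 < d) (hcop : Nat.Coprime e d)
    (J : Matrix (Fin (e + d)) (Fin (e + d)) ℂ)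
    (hJ : J = Matrix.of fun i j : Fin (e + d) => Jfun e d (i : ℕ) (j : ℕ))
    (G : Matrix (Fin (e + d)) (Fin (e + d)) ℂ) (hG : G.trace = 0) :
    ∃! PN : Matrix (Fin (e + d)) (Fin (e + d)) ℂ × Matrix (Fin (e + d)) (Fin (e + d)) ℂ,
      (PN.1.trace = 0 ∧ ∀ i j : Fin (e + d), e ≤ (i : ℕ) → (j : ℕ) < e → PN.1 i j = 0) ∧
      (∀ i j : Fin (e + d), ¬((i : ℕ) < e ∧ e ≤ (j : ℕ)) → PN.2 i j = 0) ∧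
      G = (Jᵀ * PN.1 - PN.1 * Jᵀ) + PN.2 := by
  have hn : 0 < e + d := by omega
  have hcast : ((e + d : ℕ) : ℂ) ≠ 0 := Nat.cast_ne_zero.mpr (by omega)
  -- the projection killing the lower-left block
  let pqL : Matrix (Fin (e + d)) (Fin (e + d)) ℂ →ₗ[ℂ] Matrix (Fin (e + d)) (Fin (e + d)) ℂ :=
    { toFun := fun X => Matrix.of fun i j => if e ≤ (i : ℕ) ∧ (j : ℕ) < e then 0 else X i j
      map_add' := by
        intro X Y; ext i j
        simp only [Matrix.of_apply, Matrix.add_apply]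
        split_ifs <;> simp
      map_smul' := by
        intro c X; ext i j
        simp only [Matrix.of_apply, Matrix.smul_apply, RingHom.id_apply, smul_eq_mul]
        split_ifs <;> simp }
  -- move the lower-left block to the upper-right block
  let tnL : Matrix (Fin (e + d)) (Fin (e + d)) ℂ →ₗ[ℂ] Matrix (Fin (e + d)) (Fin (e + d)) ℂ :=
    { toFun := fun X => Matrix.of fun i j => if (i : ℕ) < e ∧ e ≤ (j : ℕ) then X j i else 0
      map_add' := by
        intro X Y; ext i j
        simp only [Matrix.of_apply, Matrix.add_apply]
        split_ifs <;> simp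
      map_smul' := by
        intro c X; ext i j
        simp only [Matrix.of_apply, Matrix.smul_apply, RingHom.id_apply, smul_eq_mul]
        split_ifs <;> simp }
  let T : Matrix (Fin (e + d)) (Fin (e + d)) ℂ →ₗ[ℂ] Matrix (Fin (e + d)) (Fin (e + d)) ℂ :=
    (LinearMap.mulLeft ℂ Jᵀ - LinearMap.mulRight ℂ Jᵀ) ∘ₗ pqL + tnL
  have hT : ∀ X, T X = Jᵀ * (pqL X) - (pqL X) * Jᵀ + tnL X := fun X => rfl
  -- the kernel of T is the scalar matrices
  have hker : LinearMap.ker T = Submodule.span ℂ {(1 : Matrix (Fin (e + d)) (Fin (e + d)) ℂ)} := by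
    apply le_antisymm
    · intro X hX
      rw [LinearMap.mem_ker, hT] at hX
      have hcomm : ∀ i j : Fin (e + d), ¬((i : ℕ) < e ∧ e ≤ (j : ℕ)) →
          (Jᵀ * (pqL X) - (pqL X) * Jᵀ) i j = 0 := by
        intro i j hg
        have h1 : (Jᵀ * (pqL X) - (pqL X) * Jᵀ) i j + tnL X i j = 0 := by
          rw [← Matrix.add_apply, hX, Matrix.zero_apply]
        have h2 : tnL X i j = 0 := by
          show (if (i : ℕ) < e ∧ e ≤ (j : ℕ) then X j i else 0) = 0
          rw [if_neg hg]
        rw [h2, add_zero] at h1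
        exact h1
      obtain ⟨c, hc⟩ := keyM e d he hd hcop (pqL X)
        (fun i j hi hj => by
          show (if e ≤ (i : ℕ) ∧ (j : ℕ) < e then 0 else X i j) = 0
          rw [if_pos ⟨hi, hj⟩])
        (fun i j hg => by rw [← hJ]; exact hcomm i j hg)
      have htn : tnL X = 0 := by
        have : Jᵀ * (pqL X) - (pqL X) * Jᵀ = 0 := by
          rw [hc]; simp [Matrix.mul_smul, Matrix.smul_mul]
        rw [this, zero_add] at hX
        exact hX
      have hXc : X = c • 1 := by
        ext i j
        by_cases hij : e ≤ (i : ℕ) ∧ (j : ℕ) < e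
        · have h1 : X j i = 0 ∨ True := Or.inr trivial
          have h2 : tnL X j i = 0 := by rw [htn]; rfl
          have h3 : (if (j : ℕ) < e ∧ e ≤ (i : ℕ) then X i j else 0) = 0 := h2
          rw [if_pos ⟨hij.2, hij.1⟩] at h3
          rw [h3, Matrix.smul_apply, Matrix.one_apply,
            if_neg (fun hh : i = j => by rw [hh] at hij; omega), smul_zero]
        · have h4 : pqL X i j = (c • (1 : Matrix (Fin (e + d)) (Fin (e + d)) ℂ)) i j := by
            rw [hc]
          have h5 : (if e ≤ (i : ℕ) ∧ (j : ℕ) < e then 0 else X i j) = (c • (1 : Matrix (Fin (e + d)) (Fin (e + d)) ℂ)) i j := h4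
          rw [if_neg hij] at h5
          exact h5
      rw [hXc]
      exact Submodule.mem_span_singleton.mpr ⟨c, rfl⟩
    · rw [Submodule.span_le, Set.singleton_subset_iff]
      show T 1 = 0
      rw [hT]
      have h1 : pqL (1 : Matrix (Fin (e + d)) (Fin (e + d)) ℂ) = 1 := by
        ext i j
        show (if e ≤ (i : ℕ) ∧ (j : ℕ) < e then 0 else (1 : Matrix (Fin (e + d)) (Fin (e + d)) ℂ) i j) = _
        by_cases hij : e ≤ (i : ℕ) ∧ (j : ℕ) < e
        · rw [if_pos hij, Matrix.one_apply, if_neg (fun hh : i = j => by rw [hh] at hij; omega)]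
        · rw [if_neg hij]
      have h2 : tnL (1 : Matrix (Fin (e + d)) (Fin (e + d)) ℂ) = 0 := by
        ext i j
        show (if (i : ℕ) < e ∧ e ≤ (j : ℕ) then (1 : Matrix (Fin (e + d)) (Fin (e + d)) ℂ) j i else 0) = 0
        by_cases hij : (i : ℕ) < e ∧ e ≤ (j : ℕ)
        · rw [if_pos hij, Matrix.one_apply, if_neg (fun hh : j = i => by rw [hh] at hij; omega)]
        · rw [if_neg hij]
      rw [h1, h2, Matrix.mul_one, Matrix.one_mul, sub_self, add_zero]
  -- dimension count
  have hone : (1 : Matrix (Fin (e + d)) (Fin (e + d)) ℂ) ≠ 0 := fun h => by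
    have h0 := congrFun (congrFun h ⟨0, hn⟩) ⟨0, hn⟩
    rw [Matrix.one_apply_eq, Matrix.zero_apply] at h0
    exact one_ne_zero h0
  have hkerfin : Module.finrank ℂ (LinearMap.ker T) = 1 := by
    rw [hker]; exact finrank_span_singleton hone
  let trL : Matrix (Fin (e + d)) (Fin (e + d)) ℂ →ₗ[ℂ] ℂ :=
    Matrix.traceLinearMap (Fin (e + d)) ℂ ℂ
  have htr_apply : ∀ X : Matrix (Fin (e + d)) (Fin (e + d)) ℂ, trL X = X.trace :=
    fun X => rfl
  have htrsurj : LinearMap.range trL = ⊤ := by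
    rw [LinearMap.range_eq_top]
    intro c
    refine ⟨(c / ((e + d : ℕ) : ℂ)) • 1, ?_⟩
    rw [htr_apply, Matrix.trace_smul, Matrix.trace_one, smul_eq_mul]
    simp only [Fintype.card_fin]
    exact div_mul_cancel₀ c hcast
  have h1 := LinearMap.finrank_range_add_finrank_ker T
  have h2 := LinearMap.finrank_range_add_finrank_ker trL
  rw [htrsurj, finrank_top, Module.finrank_self] at h2
  rw [hkerfin] at h1
  have hle : LinearMap.range T ≤ LinearMap.ker trL := by
    rintro x ⟨X, rfl⟩
    rw [LinearMap.mem_ker, htr_apply, hT]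
    have htn0 : (tnL X).trace = 0 := by
      apply Finset.sum_eq_zero; intro i _
      show (if (i : ℕ) < e ∧ e ≤ (i : ℕ) then X i i else 0) = 0
      rw [if_neg (by omega)]
    rw [Matrix.trace_add, Matrix.trace_sub, Matrix.trace_mul_comm, sub_self, htn0, add_zero]
  have hfr : Module.finrank ℂ (LinearMap.range T)
      = Module.finrank ℂ (LinearMap.ker trL) := by omega
  have heq : LinearMap.range T = LinearMap.ker trL :=
    Submodule.eq_of_le_of_finrank_eq hle hfr
  -- existence
  have hGmem : G ∈ LinearMap.ker trL := by rw [LinearMap.mem_ker, htr_apply]; exact hG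
  rw [← heq] at hGmem
  obtain ⟨X, hX⟩ := hGmem
  rw [hT] at hX
  set P0 := pqL X with hP0
  set s := P0.trace / ((e + d : ℕ) : ℂ) with hs
  set P := P0 - s • 1 with hP
  have hPcomm : Jᵀ * P - P * Jᵀ = Jᵀ * P0 - P0 * Jᵀ := by
    rw [hP, Matrix.mul_sub, Matrix.sub_mul, Matrix.mul_smul, Matrix.smul_mul,
      Matrix.mul_one, Matrix.one_mul]
    abel
  have hPeq : G = Jᵀ * P - P * Jᵀ + tnL X := by rw [hPcomm, hX]
  have hPtr : P.trace = 0 := by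
    rw [hP, Matrix.trace_sub, Matrix.trace_smul, Matrix.trace_one, smul_eq_mul]
    simp only [Fintype.card_fin]
    rw [hs, div_mul_cancel₀ _ hcast, sub_self]
  have hPb : ∀ i j : Fin (e + d), e ≤ (i : ℕ) → (j : ℕ) < e → P i j = 0 := by
    intro i j hi hj
    rw [hP, Matrix.sub_apply, Matrix.smul_apply, Matrix.one_apply,
      if_neg (fun hh : i = j => by rw [hh] at hi; omega), smul_zero, sub_zero]
    show (if e ≤ (i : ℕ) ∧ (j : ℕ) < e then 0 else X i j) = 0
    rw [if_pos ⟨hi, hj⟩]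
  have hNb : ∀ i j : Fin (e + d), ¬((i : ℕ) < e ∧ e ≤ (j : ℕ)) → tnL X i j = 0 := by
    intro i j hg
    show (if (i : ℕ) < e ∧ e ≤ (j : ℕ) then X j i else 0) = 0
    rw [if_neg hg]
  refine ⟨(P, tnL X), ⟨⟨hPtr, hPb⟩, hNb, hPeq⟩, ?_⟩
  -- uniqueness
  rintro ⟨Q, N⟩ ⟨⟨hQtr, hQb⟩, hNb', hQeq⟩
  dsimp only at hQtr hQb hNb' hQeq
  have hcomb : Jᵀ * Q - Q * Jᵀ + N = Jᵀ * P - P * Jᵀ + tnL X := by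
    rw [← hQeq, ← hPeq]
  have h9 : Jᵀ * (Q - P) - (Q - P) * Jᵀ - (tnL X - N)
      = (Jᵀ * Q - Q * Jᵀ + N) - (Jᵀ * P - P * Jᵀ + tnL X) := by
    rw [Matrix.mul_sub, Matrix.sub_mul]; abel
  rw [hcomb, sub_self] at h9
  have h10 : Jᵀ * (Q - P) - (Q - P) * Jᵀ = tnL X - N := sub_eq_zero.mp h9
  obtain ⟨c, hc⟩ := keyM e d he hd hcop (Q - P)
    (fun i j hi hj => by
      rw [Matrix.sub_apply, hQb i j hi hj, hPb i j hi hj, sub_self])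
    (fun i j hg => by
      rw [← hJ, h10, Matrix.sub_apply, hNb i j hg, hNb' i j hg, sub_self])
  have hctr : (Q - P).trace = 0 := by rw [Matrix.trace_sub, hQtr, hPtr, sub_self]
  rw [hc, Matrix.trace_smul, Matrix.trace_one, smul_eq_mul] at hctr
  simp only [Fintype.card_fin] at hctr
  have hc0 : c = 0 := by
    rcases mul_eq_zero.mp hctr with h | h
    · exact h
    · exact absurd h hcast
  have hQP : Q = P := by
    have : Q - P = 0 := by rw [hc, hc0, zero_smul]
    exact sub_eq_zero.mp this
  have hNX : N = tnL X := by
    have := hcomb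
    rw [hQP] at this
    exact add_left_cancel this
  rw [hQP, hNX]
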